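/- arXiv:math/0511179 — 2 statements merged into one kernel-verified Lean document; each statement's English description precedes it below -/
import Mathlib

section
/- The Coxeter group of type D_n admits a presentation with three generators σ₁, σ, ρ and relations: σ₁σⁱσ₁σ⁻ⁱ = σⁱσ₁σ⁻ⁱσ₁ for 2 ≤ i ≤ n/2; σⁿ = (σσ₁)ⁿ⁻¹; ρσⁱσ₁σ⁻ⁱ = σⁱσ₁σ⁻ⁱρ for i = 0 and 2 ≤ i ≤ n−2; ρσσ₁σ⁻¹ρ = σσ₁σ⁻¹ρσσ₁σ⁻¹; σ₁² = 1; ρ² = 1. -/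
namespace CoxeterD

open FreeGroup in
/-- Relators of the standard Coxeter presentation of type `D_n`: `Sum.inl i` is
`s_{i+1}` (`i : Fin (n-1)`), `Sum.inr ()` is `r`.  All generators are involutions,
`r` commutes with every `sᵢ` except `s₂`, and `(rs₂)³ = 1`. -/
inductive IsCoxDRel (n : ℕ) : FreeGroup (Fin (n - 1) ⊕ Unit) → Prop
  | sq (i : Fin (n - 1)) : IsCoxDRel n ((of (.inl i)) ^ 2)
  | r_sq : IsCoxDRel n ((of (.inr ()) : FreeGroup (Fin (n - 1) ⊕ Unit)) ^ 2)
  | comm_ss (i j : Fin (n - 1)) (h : (i : ℕ) + 1 < j) :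
      IsCoxDRel n ((of (.inl i) * of (.inl j)) ^ 2)
  | braid_s (i : ℕ) (h : i + 1 < n - 1) :
      IsCoxDRel n ((of (.inl ⟨i, by omega⟩) * of (.inl ⟨i + 1, h⟩)) ^ 3)
  | comm_r (i : Fin (n - 1)) (h : (i : ℕ) ≠ 1) :
      IsCoxDRel n ((of (.inr ()) * of (.inl i)) ^ 2)
  | braid_r (h : 1 < n - 1) :
      IsCoxDRel n ((of (.inr ()) * of (.inl ⟨1, h⟩)) ^ 3)

open FreeGroup in
/-- Relators of the three-generator presentation of the Coxeter group of type `D_n`: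
generator `0` is `σ₁`, generator `1` is `σ`, generator `2` is `ρ`. -/
inductive IsCoxDThreeRel (n : ℕ) : FreeGroup (Fin 3) → Prop
  | r₁ (i : ℕ) (h₁ : 2 ≤ i) (h₂ : i ≤ n / 2) :
      IsCoxDThreeRel n (of 0 * of 1 ^ i * of 0 * (of 1 ^ i)⁻¹ *
        (of 1 ^ i * of 0 * (of 1 ^ i)⁻¹ * of 0)⁻¹)
  | r₂ : IsCoxDThreeRel n (of 1 ^ n * ((of 1 * of 0) ^ (n - 1))⁻¹)
  | r₃ (i : ℕ) (h : i = 0 ∨ (2 ≤ i ∧ i ≤ n - 2)) :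
      IsCoxDThreeRel n (of 2 * (of 1 ^ i * of 0 * (of 1 ^ i)⁻¹) *
        (of 1 ^ i * of 0 * (of 1 ^ i)⁻¹ * of 2)⁻¹)
  | r₄ : IsCoxDThreeRel n (of 2 * (of 1 * of 0 * (of 1)⁻¹) * of 2 *
      (of 1 * of 0 * (of 1)⁻¹ * of 2 * (of 1 * of 0 * (of 1)⁻¹))⁻¹)
  | r₅ : IsCoxDThreeRel n ((of 0 : FreeGroup (Fin 3)) ^ 2)
  | r₆ : IsCoxDThreeRel n ((of 2 : FreeGroup (Fin 3)) ^ 2)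

section Helpers

variable {G : Type*} [Group G]

lemma self_inv {u : G} (h : u * u = 1) : u⁻¹ = u :=
  inv_eq_of_mul_eq_one_right h

lemma comm_of_sq {u v : G} (hu : u * u = 1) (hv : v * v = 1) (h : (u * v) ^ 2 = 1) :
    u * v = v * u := by
  have h' : (u * v) * (u * v) = 1 := by rw [← pow_two]; exact h
  calc u * v = (u * v)⁻¹ := (self_inv h').symm
    _ = v⁻¹ * u⁻¹ := mul_inv_rev u v
    _ = v * u := by rw [self_inv hu, self_inv hv]

lemma sq_of_comm {u v : G} (hu : u * u = 1) (hv : v * v = 1) (h : u * v = v * u) :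
    (u * v) ^ 2 = 1 := by
  calc (u * v) ^ 2 = (u * v) * (u * v) := pow_two _
    _ = u * (v * u) * v := by simp only [mul_assoc]
    _ = u * (u * v) * v := by rw [← h]
    _ = (u * u) * (v * v) := by simp only [mul_assoc]
    _ = 1 := by rw [hu, hv, one_mul]

lemma pow_three (a : G) : a ^ 3 = a * a * a := by
  rw [show (3 : ℕ) = 2 + 1 from rfl, pow_succ, pow_two]

lemma braid_of_cube {u v : G} (hu : u * u = 1) (hv : v * v = 1) (h : (u * v) ^ 3 = 1) :
    u * v * u = v * u * v := by
  have e : (u * v * u) * (v * u * v) = 1 := by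
    calc (u * v * u) * (v * u * v) = (u * v) * (u * v) * (u * v) := by simp only [mul_assoc]
      _ = (u * v) ^ 3 := (pow_three _).symm
      _ = 1 := h
  calc u * v * u = (v * u * v)⁻¹ := eq_inv_of_mul_eq_one_left e
    _ = v⁻¹ * (u⁻¹ * v⁻¹) := by simp only [mul_inv_rev, mul_assoc]
    _ = v * u * v := by rw [self_inv hu, self_inv hv, mul_assoc]

lemma cube_of_braid {u v : G} (hu : u * u = 1) (hv : v * v = 1) (h : u * v * u = v * u * v) :
    (u * v) ^ 3 = 1 := by
  calc (u * v) ^ 3 = (u * v) * (u * v) * (u * v) := pow_three _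
    _ = (u * v * u) * (v * u * v) := by simp only [mul_assoc]
    _ = (v * u * v) * (v * u * v) := by rw [h]
    _ = v * u * (v * v) * (u * v) := by simp only [mul_assoc]
    _ = v * (u * u) * v := by rw [hv, mul_one]; simp only [mul_assoc]
    _ = v * v := by rw [hu, mul_one]
    _ = 1 := hv

end Helpers

section Seg

variable {G : Type*} [Group G]

/-- product `f j * f (j+1) * ⋯ * f (j+l-1)` -/
def seg (f : ℕ → G) (j l : ℕ) : G := ((List.range l).map fun i => f (j + i)).prod

@[simp] lemma seg_zero (f : ℕ → G) (j : ℕ) : seg f j 0 = 1 := rfl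

lemma seg_succ (f : ℕ → G) (j l : ℕ) : seg f j (l + 1) = seg f j l * f (j + l) := by
  simp [seg, List.range_succ]

lemma seg_one (f : ℕ → G) (j : ℕ) : seg f j 1 = f j := by
  rw [seg_succ, seg_zero, one_mul, add_zero]

lemma seg_cons (f : ℕ → G) (j : ℕ) : ∀ l, seg f j (l + 1) = f j * seg f (j + 1) l := by
  intro l
  induction l with
  | zero => rw [seg_one, seg_zero, mul_one]
  | succ l ih =>
      rw [seg_succ, ih, seg_succ, mul_assoc, show j + (l + 1) = j + 1 + l by omega]

/-- ℤ-indexed version -/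
def segZ (f : ℤ → G) (j : ℤ) (l : ℕ) : G := ((List.range l).map fun i => f (j + i)).prod

@[simp] lemma segZ_zero (f : ℤ → G) (j : ℤ) : segZ f j 0 = 1 := rfl

lemma segZ_succ (f : ℤ → G) (j : ℤ) (l : ℕ) : segZ f j (l + 1) = segZ f j l * f (j + l) := by
  simp [segZ, List.range_succ]

lemma segZ_one (f : ℤ → G) (j : ℤ) : segZ f j 1 = f j := by
  rw [segZ_succ, segZ_zero, one_mul, Nat.cast_zero, add_zero]

lemma segZ_cons (f : ℤ → G) (j : ℤ) : ∀ l, segZ f j (l + 1) = f j * segZ f (j + 1) l := by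
  intro l
  induction l with
  | zero => rw [segZ_one, segZ_zero, mul_one]
  | succ l ih =>
      rw [segZ_succ, ih, segZ_succ, mul_assoc,
        show j + ((l : ℕ) + 1 : ℕ) = j + 1 + (l : ℕ) by push_cast; ring]

end Seg

section TypeA

variable {G : Type*} [Group G] (n : ℕ) (t : ℕ → G)

/-- letters `t 0, …, t (j-1)` all commute with `t k` when `j ≤ k - 1`. -/
lemma seg_comm_t (htc : ∀ i j, i + 2 ≤ j → j ≤ n - 2 → t i * t j = t j * t i)
    (j k : ℕ) (h1 : j + 1 ≤ k) (h2 : k ≤ n - 2) :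
    seg t 0 j * t k = t k * seg t 0 j := by
  induction j with
  | zero => simp
  | succ m ih =>
      rw [seg_succ]
      calc seg t 0 m * t (0 + m) * t k
          = seg t 0 m * (t (0 + m) * t k) := by rw [mul_assoc]
        _ = seg t 0 m * (t k * t (0 + m)) := by rw [htc (0 + m) k (by omega) h2]
        _ = (seg t 0 m * t k) * t (0 + m) := by rw [mul_assoc]
        _ = t k * seg t 0 m * t (0 + m) := by rw [ih (by omega)]
        _ = t k * (seg t 0 m * t (0 + m)) := by rw [mul_assoc]

/-- conjugation by the Coxeter element shifts generators. -/
lemma C_conj (htc : ∀ i j, i + 2 ≤ j → j ≤ n - 2 → t i * t j = t j * t i)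
    (htb : ∀ i, i + 1 ≤ n - 2 → t i * t (i + 1) * t i = t (i + 1) * t i * t (i + 1))
    (j m : ℕ) (h1 : j + 2 ≤ m) (h2 : m ≤ n - 1) :
    seg t 0 m * t j = t (j + 1) * seg t 0 m := by
  induction m, h1 using Nat.le_induction with
  | base =>
      rw [seg_succ, seg_succ]
      simp only [zero_add]
      calc seg t 0 j * t j * t (j + 1) * t j
          = seg t 0 j * (t j * t (j + 1) * t j) := by simp only [mul_assoc]
        _ = seg t 0 j * (t (j + 1) * t j * t (j + 1)) := by rw [htb j (by omega)]
        _ = (seg t 0 j * t (j + 1)) * (t j * t (j + 1)) := by simp only [mul_assoc]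
        _ = (t (j + 1) * seg t 0 j) * (t j * t (j + 1)) := by
              rw [seg_comm_t n t htc j (j + 1) (by omega) (by omega)]
        _ = t (j + 1) * (seg t 0 j * t j * t (j + 1)) := by simp only [mul_assoc]
  | succ m hm ih =>
      rw [seg_succ]
      simp only [zero_add]
      calc seg t 0 m * t m * t j
          = seg t 0 m * (t j * t m) := by rw [mul_assoc, ← htc j m (by omega) (by omega)]
        _ = (seg t 0 m * t j) * t m := by rw [mul_assoc]
        _ = (t (j + 1) * seg t 0 m) * t m := by rw [ih (by omega)]
        _ = t (j + 1) * (seg t 0 m * t m) := by rw [mul_assoc]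

lemma C_push (htc : ∀ i j, i + 2 ≤ j → j ≤ n - 2 → t i * t j = t j * t i)
    (htb : ∀ i, i + 1 ≤ n - 2 → t i * t (i + 1) * t i = t (i + 1) * t i * t (i + 1))
    (l j m : ℕ) (h1 : j + l + 1 ≤ m) (h2 : m ≤ n - 1) :
    seg t 0 m * seg t j l = seg t (j + 1) l * seg t 0 m := by
  induction l with
  | zero => simp
  | succ l ih =>
      rw [seg_succ t j l, seg_succ t (j + 1) l]
      calc seg t 0 m * (seg t j l * t (j + l))
          = (seg t 0 m * seg t j l) * t (j + l) := by rw [mul_assoc]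
        _ = (seg t (j + 1) l * seg t 0 m) * t (j + l) := by rw [ih (by omega)]
        _ = seg t (j + 1) l * (seg t 0 m * t (j + l)) := by rw [mul_assoc]
        _ = seg t (j + 1) l * (t (j + l + 1) * seg t 0 m) := by
              rw [C_conj n t htc htb (j + l) m (by omega) h2]
        _ = (seg t (j + 1) l * t (j + 1 + l)) * seg t 0 m := by
              rw [show j + l + 1 = j + 1 + l by omega, mul_assoc]

lemma C_pow (ht2 : ∀ i, i ≤ n - 2 → t i * t i = 1)
    (htc : ∀ i j, i + 2 ≤ j → j ≤ n - 2 → t i * t j = t j * t i)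
    (htb : ∀ i, i + 1 ≤ n - 2 → t i * t (i + 1) * t i = t (i + 1) * t i * t (i + 1))
    (m' : ℕ) (hm : m' + 1 ≤ n - 1) :
    ∀ k l, k + l = m' + 1 → 1 ≤ l →
      (seg t 0 (m' + 1)) ^ (k + 1) = seg t k l * (seg t 0 (m' + 1) * t m') ^ k := by
  intro k
  induction k with
  | zero =>
      intro l hl _
      rw [pow_one, pow_zero, mul_one, show l = m' + 1 by omega]
  | succ k ih =>
      intro l hl hl1
      have ih' := ih (l + 1) (by omega) (by omega)
      have hseg := seg_succ t k l
      rw [show k + l = m' by omega] at hseg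
      rw [hseg] at ih'
      calc (seg t 0 (m' + 1)) ^ (k + 1 + 1)
          = seg t 0 (m' + 1) * (seg t 0 (m' + 1)) ^ (k + 1) := pow_succ' _ _
        _ = seg t 0 (m' + 1) * (seg t k l * t m' * (seg t 0 (m' + 1) * t m') ^ k) := by
              rw [ih']
        _ = (seg t 0 (m' + 1) * seg t k l) * (t m' * (seg t 0 (m' + 1) * t m') ^ k) := by
              simp only [mul_assoc]
        _ = (seg t (k + 1) l * seg t 0 (m' + 1)) * (t m' * (seg t 0 (m' + 1) * t m') ^ k) := by
              rw [C_push n t htc htb l k (m' + 1) (by omega) hm]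
        _ = seg t (k + 1) l * ((seg t 0 (m' + 1) * t m') * (seg t 0 (m' + 1) * t m') ^ k) := by
              simp only [mul_assoc]
        _ = seg t (k + 1) l * (seg t 0 (m' + 1) * t m') ^ (k + 1) := by rw [← pow_succ']

lemma C_order (ht2 : ∀ i, i ≤ n - 2 → t i * t i = 1)
    (htc : ∀ i j, i + 2 ≤ j → j ≤ n - 2 → t i * t j = t j * t i)
    (htb : ∀ i, i + 1 ≤ n - 2 → t i * t (i + 1) * t i = t (i + 1) * t i * t (i + 1)) :
    ∀ m, 1 ≤ m → m ≤ n - 1 → (seg t 0 m) ^ (m + 1) = 1 := by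
  intro m hm1
  induction m, hm1 using Nat.le_induction with
  | base =>
      intro _
      rw [seg_one, show (1 + 1 : ℕ) = 2 from rfl, pow_two]
      exact ht2 0 (by omega)
  | succ m hm1 ih =>
      intro hm
      have hpow := C_pow n t ht2 htc htb m hm m 1 (by omega) le_rfl
      rw [seg_one] at hpow
      have hCt : seg t 0 (m + 1) * t m = seg t 0 m := by
        rw [seg_succ, zero_add, mul_assoc, ht2 m (by omega), mul_one]
      calc (seg t 0 (m + 1)) ^ (m + 1 + 1)
          = seg t 0 (m + 1) * (seg t 0 (m + 1)) ^ (m + 1) := pow_succ' _ _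
        _ = seg t 0 (m + 1) * (t m * (seg t 0 (m + 1) * t m) ^ m) := by rw [hpow]
        _ = (seg t 0 (m + 1) * t m) * (seg t 0 (m + 1) * t m) ^ m := by
              simp only [mul_assoc]
        _ = (seg t 0 (m + 1) * t m) ^ (m + 1) := by rw [← pow_succ']
        _ = (seg t 0 m) ^ (m + 1) := by rw [hCt]
        _ = 1 := ih (by omega)

lemma sigma_pow_t (ht2 : ∀ i, i ≤ n - 2 → t i * t i = 1)
    (htc : ∀ i j, i + 2 ≤ j → j ≤ n - 2 → t i * t j = t j * t i)
    (htb : ∀ i, i + 1 ≤ n - 2 → t i * t (i + 1) * t i = t (i + 1) * t i * t (i + 1))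
    (hn : 3 ≤ n) :
    ∀ k j, j + k ≤ n - 2 → (seg t 0 (n - 1)) ^ k * t j = t (j + k) * (seg t 0 (n - 1)) ^ k := by
  intro k
  induction k with
  | zero => intro j _; rw [pow_zero, one_mul, mul_one, add_zero]
  | succ k ih =>
      intro j h
      calc (seg t 0 (n - 1)) ^ (k + 1) * t j
          = (seg t 0 (n - 1)) ^ k * (seg t 0 (n - 1) * t j) := by
            rw [pow_succ, mul_assoc]
        _ = (seg t 0 (n - 1)) ^ k * (t (j + 1) * seg t 0 (n - 1)) := by
            rw [C_conj n t htc htb j (n - 1) (by omega) le_rfl]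
        _ = ((seg t 0 (n - 1)) ^ k * t (j + 1)) * seg t 0 (n - 1) := by rw [mul_assoc]
        _ = (t (j + 1 + k) * (seg t 0 (n - 1)) ^ k) * seg t 0 (n - 1) := by
            rw [ih (j + 1) (by omega)]
        _ = t (j + (k + 1)) * (seg t 0 (n - 1)) ^ (k + 1) := by
            rw [show j + 1 + k = j + (k + 1) by omega, mul_assoc, ← pow_succ]

lemma sigma_order (ht2 : ∀ i, i ≤ n - 2 → t i * t i = 1)
    (htc : ∀ i j, i + 2 ≤ j → j ≤ n - 2 → t i * t j = t j * t i)
    (htb : ∀ i, i + 1 ≤ n - 2 → t i * t (i + 1) * t i = t (i + 1) * t i * t (i + 1))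
    (hn : 3 ≤ n) : (seg t 0 (n - 1)) ^ n = 1 := by
  have h := C_order n t ht2 htc htb (n - 1) (by omega) le_rfl
  rw [show n - 1 + 1 = n by omega] at h
  exact h

lemma sigma_t0_order (ht2 : ∀ i, i ≤ n - 2 → t i * t i = 1)
    (htc : ∀ i j, i + 2 ≤ j → j ≤ n - 2 → t i * t j = t j * t i)
    (htb : ∀ i, i + 1 ≤ n - 2 → t i * t (i + 1) * t i = t (i + 1) * t i * t (i + 1))
    (hn : 3 ≤ n) : (seg t 0 (n - 1) * t 0) ^ (n - 1) = 1 := by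
  have hst : seg t 0 (n - 1) * t 0 = t 1 * seg t 0 (n - 1) := by
    have := C_conj n t htc htb 0 (n - 1) (by omega) le_rfl
    rwa [zero_add] at this
  have key : ∀ k, k ≤ n - 2 → (t 1 * seg t 0 (n - 1)) ^ k = seg t 1 k * (seg t 0 (n - 1)) ^ k := by
    intro k
    induction k with
    | zero => intro _; rw [pow_zero, pow_zero, seg_zero, one_mul]
    | succ k ih =>
        intro h
        calc (t 1 * seg t 0 (n - 1)) ^ (k + 1)
            = (t 1 * seg t 0 (n - 1)) ^ k * (t 1 * seg t 0 (n - 1)) := pow_succ _ _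
          _ = seg t 1 k * (seg t 0 (n - 1)) ^ k * (t 1 * seg t 0 (n - 1)) := by
              rw [ih (by omega)]
          _ = seg t 1 k * (((seg t 0 (n - 1)) ^ k * t 1) * seg t 0 (n - 1)) := by
              simp only [mul_assoc]
          _ = seg t 1 k * ((t (1 + k) * (seg t 0 (n - 1)) ^ k) * seg t 0 (n - 1)) := by
              rw [sigma_pow_t n t ht2 htc htb hn k 1 (by omega)]
          _ = (seg t 1 k * t (1 + k)) * ((seg t 0 (n - 1)) ^ k * seg t 0 (n - 1)) := by
              simp only [mul_assoc]
          _ = seg t 1 (k + 1) * (seg t 0 (n - 1)) ^ (k + 1) := by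
              rw [← seg_succ, ← pow_succ]
  have h4 : (seg t 0 (n - 1)) ^ (n - 1) = (seg t 0 (n - 1))⁻¹ := by
    have h5 : seg t 0 (n - 1) * (seg t 0 (n - 1)) ^ (n - 1) = 1 := by
      rw [← pow_succ', show n - 1 + 1 = n by omega]
      exact sigma_order n t ht2 htc htb hn
    rw [← inv_eq_of_mul_eq_one_right h5]
  have h6 : seg t 0 (n - 1) = t 0 * seg t 1 (n - 2) := by
    have := seg_cons t 0 (n - 2)
    rw [zero_add] at this
    rw [show n - 1 = n - 2 + 1 by omega, this]
  calc (seg t 0 (n - 1) * t 0) ^ (n - 1)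
      = (t 1 * seg t 0 (n - 1)) ^ (n - 1) := by rw [hst]
    _ = (t 1 * seg t 0 (n - 1)) ^ (n - 2) * (t 1 * seg t 0 (n - 1)) := by
        rw [show n - 1 = n - 2 + 1 by omega, pow_succ]
    _ = seg t 1 (n - 2) * (seg t 0 (n - 1)) ^ (n - 2) * (t 1 * seg t 0 (n - 1)) := by
        rw [key (n - 2) le_rfl]
    _ = seg t 1 (n - 2) * ((seg t 0 (n - 1)) ^ (n - 2) * (seg t 0 (n - 1) * t 0)) := by
        rw [← hst]; simp only [mul_assoc]
    _ = seg t 1 (n - 2) * ((seg t 0 (n - 1)) ^ (n - 1) * t 0) := by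
        rw [show n - 1 = n - 2 + 1 by omega, pow_succ]; simp only [mul_assoc]
    _ = seg t 1 (n - 2) * ((seg t 0 (n - 1))⁻¹ * t 0) := by rw [h4]
    _ = seg t 1 (n - 2) * ((t 0 * seg t 1 (n - 2))⁻¹ * t 0) := by rw [h6]
    _ = 1 := by group

end TypeA


section SegExtra
variable {G : Type*} [Group G]
lemma segZ_comm (f : ℤ → G) (j : ℤ) (y : G) :
    ∀ l, (∀ i : ℕ, i < l → y * f (j + i) = f (j + i) * y) →
      y * segZ f j l = segZ f j l * y := by
  intro l
  induction l with
  | zero => intro _; rw [segZ_zero, one_mul, mul_one]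
  | succ l ih =>
      intro h
      rw [segZ_succ, ← mul_assoc, ih (fun i hi => h i (by omega)), mul_assoc,
        h l (by omega), mul_assoc]
end SegExtra

section TypeB

variable {G : Type*} [Group G] (n : ℕ) (s x : G)

/-- `a k = s^k x s^{-k}` -/
def aZ (s x : G) (k : ℤ) : G := s ^ k * x * (s ^ k)⁻¹

lemma aZ_zero : aZ s x 0 = x := by simp [aZ]

lemma aZ_natCast (i : ℕ) : aZ s x (i : ℤ) = s ^ i * x * (s ^ i)⁻¹ := by
  simp [aZ, zpow_natCast]

lemma aZ_sq (hx : x * x = 1) (k : ℤ) : aZ s x k * aZ s x k = 1 := by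
  have h : aZ s x k * aZ s x k = s ^ k * (x * x) * (s ^ k)⁻¹ := by unfold aZ; group
  rw [h, hx, mul_one, mul_inv_cancel]

lemma aZ_inv (hx : x * x = 1) (k : ℤ) : (aZ s x k)⁻¹ = aZ s x k :=
  self_inv (aZ_sq s x hx k)

lemma conj_aZ (m k : ℤ) : s ^ m * aZ s x k * (s ^ m)⁻¹ = aZ s x (m + k) := by
  unfold aZ; rw [zpow_add]; group

lemma conj_segZ_aZ (m j : ℤ) : ∀ l, s ^ m * segZ (aZ s x) j l * (s ^ m)⁻¹ = segZ (aZ s x) (m + j) l := by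
  intro l
  induction l with
  | zero => simp
  | succ l ih =>
      rw [segZ_succ, segZ_succ]
      calc s ^ m * (segZ (aZ s x) j l * aZ s x (j + l)) * (s ^ m)⁻¹
          = (s ^ m * segZ (aZ s x) j l * (s ^ m)⁻¹) * (s ^ m * aZ s x (j + l) * (s ^ m)⁻¹) := by
            group
        _ = segZ (aZ s x) (m + j) l * aZ s x (m + j + l) := by rw [ih, conj_aZ, add_assoc]

lemma aZ_comm_base (hc : ∀ i : ℕ, 2 ≤ i → i ≤ n / 2 →
      x * (s ^ i * x * (s ^ i)⁻¹) = (s ^ i * x * (s ^ i)⁻¹) * x)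
    (k : ℤ) (i : ℕ) (h2 : 2 ≤ i) (hi : i ≤ n / 2) :
    aZ s x k * aZ s x (k + i) = aZ s x (k + i) * aZ s x k := by
  have h0 : x * aZ s x (i : ℤ) = aZ s x (i : ℤ) * x := by
    rw [aZ_natCast]; exact hc i h2 hi
  calc aZ s x k * aZ s x (k + i)
      = (s ^ k * x * (s ^ k)⁻¹) * (s ^ k * aZ s x (i : ℤ) * (s ^ k)⁻¹) := by
        rw [conj_aZ]; rfl
    _ = s ^ k * (x * aZ s x (i : ℤ)) * (s ^ k)⁻¹ := by group
    _ = s ^ k * (aZ s x (i : ℤ) * x) * (s ^ k)⁻¹ := by rw [h0]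
    _ = (s ^ k * aZ s x (i : ℤ) * (s ^ k)⁻¹) * (s ^ k * x * (s ^ k)⁻¹) := by group
    _ = aZ s x (k + i) * aZ s x k := by rw [conj_aZ]; rfl

lemma s_pow_n_comm (hord : s ^ n = (s * x) ^ (n - 1)) : x * s ^ n = s ^ n * x := by
  have h1 : x * (s * x) ^ (n - 1) * x⁻¹ = (x * s) ^ (n - 1) := by
    rw [← conj_pow]; congr 1; group
  have h2 : s⁻¹ * (s * x) ^ (n - 1) * s = (x * s) ^ (n - 1) := by
    calc s⁻¹ * (s * x) ^ (n - 1) * s = s⁻¹ * (s * x) ^ (n - 1) * (s⁻¹)⁻¹ := by rw [inv_inv]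
      _ = (s⁻¹ * (s * x) * (s⁻¹)⁻¹) ^ (n - 1) := by rw [conj_pow]
      _ = (x * s) ^ (n - 1) := by congr 1; group
  have h3 : x * s ^ n * x⁻¹ = s ^ n := by
    rw [hord, h1, ← h2, ← hord]
    group
  calc x * s ^ n = (x * s ^ n * x⁻¹) * x := by group
    _ = s ^ n * x := by rw [h3]

lemma aZ_period (hord : s ^ n = (s * x) ^ (n - 1)) (k : ℤ) : aZ s x (k + n) = aZ s x k := by
  have hcm := s_pow_n_comm n s x hord
  have h1 : s ^ ((n : ℕ) : ℤ) * x * (s ^ ((n : ℕ) : ℤ))⁻¹ = x := by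
    rw [zpow_natCast, ← hcm]; group
  calc aZ s x (k + n) = s ^ k * (s ^ ((n : ℕ) : ℤ) * x * (s ^ ((n : ℕ) : ℤ))⁻¹) * (s ^ k)⁻¹ := by
        unfold aZ; rw [zpow_add]; group
    _ = s ^ k * x * (s ^ k)⁻¹ := by rw [h1]
    _ = aZ s x k := rfl

lemma aZ_comm_all (hn : 3 ≤ n)
    (hc : ∀ i : ℕ, 2 ≤ i → i ≤ n / 2 →
      x * (s ^ i * x * (s ^ i)⁻¹) = (s ^ i * x * (s ^ i)⁻¹) * x)
    (hord : s ^ n = (s * x) ^ (n - 1))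
    (k : ℤ) (d : ℕ) (h2 : 2 ≤ d) (hd : d ≤ n - 2) :
    aZ s x k * aZ s x (k + d) = aZ s x (k + d) * aZ s x k := by
  by_cases hcase : d ≤ n / 2
  · exact aZ_comm_base n s x hc k d h2 hcase
  · have := aZ_comm_base n s x hc (k + d) (n - d) (by omega) (by omega)
    have harg : (k + (d : ℤ)) + ((n - d : ℕ) : ℤ) = k + (n : ℕ) := by
      push_cast [Nat.cast_sub (by omega : d ≤ n)]; ring
    rw [harg, aZ_period n s x hord k] at this
    exact this.symm

lemma sx_pow (k : ℕ) : (s * x) ^ k = segZ (aZ s x) 1 k * s ^ k := by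
  induction k with
  | zero => simp
  | succ k ih =>
      have h1 : s ^ k * (s * x) = aZ s x (1 + (k : ℤ)) * s ^ (k + 1) := by
        unfold aZ
        rw [show (1 : ℤ) + (k : ℤ) = ((k + 1 : ℕ) : ℤ) by push_cast; ring, zpow_natCast]
        group
      calc (s * x) ^ (k + 1) = segZ (aZ s x) 1 k * (s ^ k * (s * x)) := by
            rw [pow_succ, ih, mul_assoc]
        _ = segZ (aZ s x) 1 k * (aZ s x (1 + (k : ℤ)) * s ^ (k + 1)) := by rw [h1]
        _ = segZ (aZ s x) 1 (k + 1) * s ^ (k + 1) := by rw [segZ_succ, mul_assoc]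

lemma s_eq_prod (hn : 3 ≤ n) (hord : s ^ n = (s * x) ^ (n - 1)) :
    s = segZ (aZ s x) 1 (n - 1) := by
  have h := sx_pow s x (n - 1)
  have h2 : s * s ^ (n - 1) = segZ (aZ s x) 1 (n - 1) * s ^ (n - 1) := by
    rw [← pow_succ', show n - 1 + 1 = n by omega, hord, h]
  exact mul_right_cancel h2

lemma s_eq_prod0 (hn : 3 ≤ n) (hord : s ^ n = (s * x) ^ (n - 1)) :
    s = segZ (aZ s x) 0 (n - 1) := by
  have h := conj_segZ_aZ s x (-1) 1 (n - 1)
  rw [← s_eq_prod n s x hn hord, show (-1 : ℤ) + 1 = 0 by ring] at h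
  calc s = s ^ (-1 : ℤ) * s * (s ^ (-1 : ℤ))⁻¹ := by group
    _ = segZ (aZ s x) 0 (n - 1) := h

lemma braid_12 (hn : 3 ≤ n) (hx : x * x = 1)
    (hc : ∀ i : ℕ, 2 ≤ i → i ≤ n / 2 →
      x * (s ^ i * x * (s ^ i)⁻¹) = (s ^ i * x * (s ^ i)⁻¹) * x)
    (hord : s ^ n = (s * x) ^ (n - 1)) :
    aZ s x 1 * aZ s x 2 * aZ s x 1 = aZ s x 2 * aZ s x 1 * aZ s x 2 := by
  have hsplit : s = aZ s x 1 * (aZ s x 2 * segZ (aZ s x) 3 (n - 3)) := by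
    conv_lhs => rw [s_eq_prod n s x hn hord, show n - 1 = (n - 3) + 1 + 1 by omega,
      segZ_cons, segZ_cons]
    rw [show (1 : ℤ) + 1 = 2 by ring, show (2 : ℤ) + 1 = 3 by ring]
  have hT : segZ (aZ s x) 3 (n - 3) * aZ s x 1 = aZ s x 1 * segZ (aZ s x) 3 (n - 3) := by
    have hcm : aZ s x 1 * segZ (aZ s x) 3 (n - 3) = segZ (aZ s x) 3 (n - 3) * aZ s x 1 := by
      apply segZ_comm
      intro i hi
      have hcomm := aZ_comm_all n s x hn hc hord 1 (i + 2) (by omega) (by omega)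
      have harg : (1 : ℤ) + ((i + 2 : ℕ) : ℤ) = 3 + (i : ℕ) := by push_cast; ring
      rw [harg] at hcomm
      exact hcomm
    exact hcm.symm
  have h2 : aZ s x 2 = s * aZ s x 1 * s⁻¹ := by
    have := conj_aZ s x 1 1
    rw [zpow_one, show (1 : ℤ) + 1 = 2 by ring] at this
    exact this.symm
  have key : aZ s x 2 = aZ s x 1 * aZ s x 2 * aZ s x 1 * aZ s x 2 * aZ s x 1 := by
    calc aZ s x 2 = s * aZ s x 1 * s⁻¹ := h2
      _ = (aZ s x 1 * (aZ s x 2 * segZ (aZ s x) 3 (n - 3))) * aZ s x 1 *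
            (aZ s x 1 * (aZ s x 2 * segZ (aZ s x) 3 (n - 3)))⁻¹ := by rw [← hsplit]
      _ = aZ s x 1 * aZ s x 2 * (segZ (aZ s x) 3 (n - 3) * aZ s x 1 *
            (segZ (aZ s x) 3 (n - 3))⁻¹) * (aZ s x 2)⁻¹ * (aZ s x 1)⁻¹ := by group
      _ = aZ s x 1 * aZ s x 2 * (aZ s x 1 * segZ (aZ s x) 3 (n - 3) *
            (segZ (aZ s x) 3 (n - 3))⁻¹) * (aZ s x 2)⁻¹ * (aZ s x 1)⁻¹ := by rw [hT]
      _ = aZ s x 1 * aZ s x 2 * aZ s x 1 * (aZ s x 2)⁻¹ * (aZ s x 1)⁻¹ := by group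
      _ = aZ s x 1 * aZ s x 2 * aZ s x 1 * aZ s x 2 * aZ s x 1 := by
            rw [aZ_inv s x hx, aZ_inv s x hx]
  calc aZ s x 1 * aZ s x 2 * aZ s x 1
      = aZ s x 1 * (aZ s x 1 * aZ s x 2 * aZ s x 1 * aZ s x 2 * aZ s x 1) * aZ s x 1 := by
        rw [← key]
    _ = (aZ s x 1 * aZ s x 1) * aZ s x 2 * aZ s x 1 * aZ s x 2 * (aZ s x 1 * aZ s x 1) := by
        simp only [mul_assoc]
    _ = aZ s x 2 * aZ s x 1 * aZ s x 2 := by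
        rw [aZ_sq s x hx]; simp only [one_mul, mul_one]

lemma braid_all (hn : 3 ≤ n) (hx : x * x = 1)
    (hc : ∀ i : ℕ, 2 ≤ i → i ≤ n / 2 →
      x * (s ^ i * x * (s ^ i)⁻¹) = (s ^ i * x * (s ^ i)⁻¹) * x)
    (hord : s ^ n = (s * x) ^ (n - 1)) (k : ℤ) :
    aZ s x k * aZ s x (k + 1) * aZ s x k = aZ s x (k + 1) * aZ s x k * aZ s x (k + 1) := by
  have hb := braid_12 n s x hn hx hc hord
  have e1 : aZ s x k = s ^ (k - 1) * aZ s x 1 * (s ^ (k - 1))⁻¹ := by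
    rw [conj_aZ, show k - 1 + 1 = k by ring]
  have e2 : aZ s x (k + 1) = s ^ (k - 1) * aZ s x 2 * (s ^ (k - 1))⁻¹ := by
    rw [conj_aZ, show k - 1 + 2 = k + 1 by ring]
  rw [e1, e2]
  calc (s ^ (k - 1) * aZ s x 1 * (s ^ (k - 1))⁻¹) * (s ^ (k - 1) * aZ s x 2 * (s ^ (k - 1))⁻¹) *
        (s ^ (k - 1) * aZ s x 1 * (s ^ (k - 1))⁻¹)
      = s ^ (k - 1) * (aZ s x 1 * aZ s x 2 * aZ s x 1) * (s ^ (k - 1))⁻¹ := by group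
    _ = s ^ (k - 1) * (aZ s x 2 * aZ s x 1 * aZ s x 2) * (s ^ (k - 1))⁻¹ := by rw [hb]
    _ = (s ^ (k - 1) * aZ s x 2 * (s ^ (k - 1))⁻¹) * (s ^ (k - 1) * aZ s x 1 * (s ^ (k - 1))⁻¹) *
        (s ^ (k - 1) * aZ s x 2 * (s ^ (k - 1))⁻¹) := by group

end TypeB

section Instantiation

variable (n : ℕ)

lemma relOne {α : Type*} {rels : Set (FreeGroup α)} {w : FreeGroup α} (h : w ∈ rels) :
    PresentedGroup.mk rels w = 1 :=
  (QuotientGroup.eq_one_iff w).mpr (Subgroup.subset_normalClosure h)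

lemma mk_of {α : Type*} (rels : Set (FreeGroup α)) (x : α) :
    PresentedGroup.mk rels (FreeGroup.of x) = PresentedGroup.of x := rfl

/-- the standard Coxeter generators `s_{i+1}` of `D_n`, as a total function -/
def tD : ℕ → PresentedGroup {r | IsCoxDRel n r} :=
  fun i => if h : i < n - 1 then PresentedGroup.of (Sum.inl ⟨i, h⟩) else 1

lemma tD_eq (i : ℕ) (h : i < n - 1) : tD n i = PresentedGroup.of (Sum.inl ⟨i, h⟩) :=
  dif_pos h

/-- the generator `r` of `D_n` -/
def rD : PresentedGroup {r | IsCoxDRel n r} := PresentedGroup.of (Sum.inr ())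

def x3 : PresentedGroup {r | IsCoxDThreeRel n r} := PresentedGroup.of 0
def s3 : PresentedGroup {r | IsCoxDThreeRel n r} := PresentedGroup.of 1
def r3 : PresentedGroup {r | IsCoxDThreeRel n r} := PresentedGroup.of 2

lemma tD_sq (hn : 3 ≤ n) : ∀ i, i ≤ n - 2 → tD n i * tD n i = 1 := by
  intro i hi
  have hlt : i < n - 1 := by omega
  have h := relOne (rels := {r | IsCoxDRel n r}) (IsCoxDRel.sq ⟨i, hlt⟩)
  rw [map_pow, mk_of, pow_two] at h
  rw [tD_eq n i hlt]
  exact h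

lemma tD_comm (hn : 3 ≤ n) : ∀ i j, i + 2 ≤ j → j ≤ n - 2 → tD n i * tD n j = tD n j * tD n i := by
  intro i j hij hj
  have hi' : i < n - 1 := by omega
  have hj' : j < n - 1 := by omega
  have h := relOne (rels := {r | IsCoxDRel n r})
    (IsCoxDRel.comm_ss ⟨i, hi'⟩ ⟨j, hj'⟩ (by change i + 1 < j; omega))
  rw [map_pow, map_mul, mk_of, mk_of] at h
  rw [tD_eq n i hi', tD_eq n j hj']
  exact comm_of_sq (by rw [← tD_eq n i hi']; exact tD_sq n hn i (by omega))
    (by rw [← tD_eq n j hj']; exact tD_sq n hn j hj) h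

lemma tD_braid (hn : 3 ≤ n) : ∀ i, i + 1 ≤ n - 2 →
    tD n i * tD n (i + 1) * tD n i = tD n (i + 1) * tD n i * tD n (i + 1) := by
  intro i hi
  have hi' : i + 1 < n - 1 := by omega
  have h := relOne (rels := {r | IsCoxDRel n r}) (IsCoxDRel.braid_s i hi')
  rw [map_pow, map_mul, mk_of, mk_of] at h
  rw [tD_eq n i (by omega), tD_eq n (i + 1) hi']
  exact braid_of_cube (by rw [← tD_eq n i (by omega)]; exact tD_sq n hn i (by omega))
    (by rw [← tD_eq n (i + 1) hi']; exact tD_sq n hn (i + 1) hi) h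

lemma rD_sq : rD n * rD n = 1 := by
  have h := relOne (rels := {r | IsCoxDRel n r}) (IsCoxDRel.r_sq (n := n))
  rw [map_pow, mk_of, pow_two] at h
  exact h

lemma rD_comm (hn : 3 ≤ n) : ∀ i, i ≤ n - 2 → i ≠ 1 → rD n * tD n i = tD n i * rD n := by
  intro i hi hne
  have hi' : i < n - 1 := by omega
  have h := relOne (rels := {r | IsCoxDRel n r})
    (IsCoxDRel.comm_r ⟨i, hi'⟩ (by change i ≠ 1; exact hne))
  rw [map_pow, map_mul, mk_of, mk_of] at h
  rw [tD_eq n i hi']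
  exact comm_of_sq (rD_sq n) (by rw [← tD_eq n i hi']; exact tD_sq n hn i hi) h

lemma rD_braid (hn : 3 ≤ n) : rD n * tD n 1 * rD n = tD n 1 * rD n * tD n 1 := by
  have h1n : 1 < n - 1 := by omega
  have h := relOne (rels := {r | IsCoxDRel n r}) (IsCoxDRel.braid_r h1n)
  rw [map_pow, map_mul, mk_of, mk_of] at h
  rw [tD_eq n 1 h1n]
  exact braid_of_cube (rD_sq n) (by rw [← tD_eq n 1 h1n]; exact tD_sq n hn 1 (by omega)) h

lemma tD_conj (hn : 3 ≤ n) : ∀ k, k ≤ n - 2 →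
    (seg (tD n) 0 (n - 1)) ^ k * tD n 0 * ((seg (tD n) 0 (n - 1)) ^ k)⁻¹ = tD n k := by
  intro k hk
  have h := sigma_pow_t n (tD n) (tD_sq n hn) (tD_comm n hn) (tD_braid n hn) hn k 0 (by omega)
  rw [zero_add] at h
  rw [h, mul_assoc, mul_inv_cancel, mul_one]

-- ==== three-generator side relations ====

lemma x3_sq : x3 n * x3 n = 1 := by
  have h := relOne (rels := {r | IsCoxDThreeRel n r}) (IsCoxDThreeRel.r₅ (n := n))
  rw [map_pow, mk_of, pow_two] at h
  exact h

lemma r3_sq : r3 n * r3 n = 1 := by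
  have h := relOne (rels := {r | IsCoxDThreeRel n r}) (IsCoxDThreeRel.r₆ (n := n))
  rw [map_pow, mk_of, pow_two] at h
  exact h

lemma hord3 : s3 n ^ n = (s3 n * x3 n) ^ (n - 1) := by
  have h := relOne (rels := {r | IsCoxDThreeRel n r}) (IsCoxDThreeRel.r₂ (n := n))
  rw [map_mul, map_pow, map_inv, map_pow, map_mul, mk_of, mk_of] at h
  exact mul_inv_eq_one.mp h

lemma hc3 : ∀ i : ℕ, 2 ≤ i → i ≤ n / 2 →
    x3 n * (s3 n ^ i * x3 n * (s3 n ^ i)⁻¹) = (s3 n ^ i * x3 n * (s3 n ^ i)⁻¹) * x3 n := by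
  intro i h1 h2
  have h := relOne (rels := {r | IsCoxDThreeRel n r}) (IsCoxDThreeRel.r₁ i h1 h2)
  simp only [map_mul, map_pow, map_inv, mk_of] at h
  rw [mul_inv_eq_one] at h
  calc x3 n * (s3 n ^ i * x3 n * (s3 n ^ i)⁻¹)
      = x3 n * s3 n ^ i * x3 n * (s3 n ^ i)⁻¹ := by simp only [mul_assoc]
    _ = s3 n ^ i * x3 n * (s3 n ^ i)⁻¹ * x3 n := h

lemma hrc3 : ∀ i : ℕ, (i = 0 ∨ (2 ≤ i ∧ i ≤ n - 2)) →
    r3 n * (s3 n ^ i * x3 n * (s3 n ^ i)⁻¹) = (s3 n ^ i * x3 n * (s3 n ^ i)⁻¹) * r3 n := by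
  intro i hi
  have h := relOne (rels := {r | IsCoxDThreeRel n r}) (IsCoxDThreeRel.r₃ i hi)
  simp only [map_mul, map_pow, map_inv, mk_of] at h
  rw [mul_inv_eq_one] at h
  exact h

lemma hrb3 : r3 n * (s3 n * x3 n * (s3 n)⁻¹) * r3 n =
    (s3 n * x3 n * (s3 n)⁻¹) * r3 n * (s3 n * x3 n * (s3 n)⁻¹) := by
  have h := relOne (rels := {r | IsCoxDThreeRel n r}) (IsCoxDThreeRel.r₄ (n := n))
  simp only [map_mul, map_inv, mk_of] at h
  rw [mul_inv_eq_one] at h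
  exact h

-- ==== the two homomorphisms ====

def FF : Fin 3 → PresentedGroup {r | IsCoxDRel n r} :=
  ![tD n 0, seg (tD n) 0 (n - 1), rD n]

lemma FF_0 : FF n 0 = tD n 0 := rfl
lemma FF_1 : FF n 1 = seg (tD n) 0 (n - 1) := rfl
lemma FF_2 : FF n 2 = rD n := rfl

def GG : Fin (n - 1) ⊕ Unit → PresentedGroup {r | IsCoxDThreeRel n r} :=
  Sum.elim (fun i => aZ (s3 n) (x3 n) ((i : ℕ) : ℤ)) (fun _ => r3 n)

lemma GG_inl (i : Fin (n - 1)) : GG n (Sum.inl i) = aZ (s3 n) (x3 n) ((i : ℕ) : ℤ) := rfl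
lemma GG_inr : GG n (Sum.inr ()) = r3 n := rfl

lemma lift_FF (hn : 3 ≤ n) : ∀ w ∈ {r | IsCoxDThreeRel n r}, FreeGroup.lift (FF n) w = 1 := by
  intro w hw
  have hconj : ∀ k, k ≤ n - 2 →
      (seg (tD n) 0 (n - 1)) ^ k * tD n 0 * ((seg (tD n) 0 (n - 1)) ^ k)⁻¹ = tD n k :=
    tD_conj n hn
  cases hw with
  | r₁ i h1 h2 =>
      simp only [map_mul, map_pow, map_inv, FreeGroup.lift_apply_of, FF_0, FF_1, FF_2]
      rw [mul_inv_eq_one]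
      have hc := hconj i (by omega)
      calc tD n 0 * seg (tD n) 0 (n - 1) ^ i * tD n 0 * (seg (tD n) 0 (n - 1) ^ i)⁻¹
          = tD n 0 * (seg (tD n) 0 (n - 1) ^ i * tD n 0 * (seg (tD n) 0 (n - 1) ^ i)⁻¹) := by
            simp only [mul_assoc]
        _ = tD n 0 * tD n i := by rw [hc]
        _ = tD n i * tD n 0 := tD_comm n hn 0 i (by omega) (by omega)
        _ = (seg (tD n) 0 (n - 1) ^ i * tD n 0 * (seg (tD n) 0 (n - 1) ^ i)⁻¹) * tD n 0 := by
            rw [hc]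
  | r₂ =>
      simp only [map_mul, map_pow, map_inv, FreeGroup.lift_apply_of, FF_0, FF_1]
      rw [sigma_order n (tD n) (tD_sq n hn) (tD_comm n hn) (tD_braid n hn) hn,
        sigma_t0_order n (tD n) (tD_sq n hn) (tD_comm n hn) (tD_braid n hn) hn,
        inv_one, mul_one]
  | r₃ i hi =>
      simp only [map_mul, map_pow, map_inv, FreeGroup.lift_apply_of, FF_0, FF_1, FF_2]
      rw [mul_inv_eq_one]
      have hc := hconj i (by omega)
      rw [hc]
      exact rD_comm n hn i (by omega) (by omega)
  | r₄ =>
      simp only [map_mul, map_inv, FreeGroup.lift_apply_of, FF_0, FF_1, FF_2]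
      rw [mul_inv_eq_one]
      have hc := hconj 1 (by omega)
      rw [pow_one] at hc
      rw [hc]
      exact rD_braid n hn
  | r₅ =>
      simp only [map_pow, FreeGroup.lift_apply_of, FF_0]
      rw [pow_two]
      exact tD_sq n hn 0 (by omega)
  | r₆ =>
      simp only [map_pow, FreeGroup.lift_apply_of, FF_2]
      rw [pow_two]
      exact rD_sq n

lemma lift_GG (hn : 3 ≤ n) : ∀ w ∈ {r | IsCoxDRel n r}, FreeGroup.lift (GG n) w = 1 := by
  intro w hw
  cases hw with
  | sq i =>
      simp only [map_pow, FreeGroup.lift_apply_of, GG_inl]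
      rw [pow_two]
      exact aZ_sq _ _ (x3_sq n) _
  | r_sq =>
      simp only [map_pow, FreeGroup.lift_apply_of, GG_inr]
      rw [pow_two]
      exact r3_sq n
  | comm_ss i j hij =>
      simp only [map_pow, map_mul, FreeGroup.lift_apply_of, GG_inl]
      have hj := j.isLt
      have hi := i.isLt
      have hcomm := aZ_comm_all n (s3 n) (x3 n) hn (hc3 n) (hord3 n)
        ((i : ℕ) : ℤ) ((j : ℕ) - (i : ℕ)) (by omega) (by omega)
      have harg : ((i : ℕ) : ℤ) + (((j : ℕ) - (i : ℕ) : ℕ) : ℤ) = ((j : ℕ) : ℤ) := by omega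
      rw [harg] at hcomm
      exact sq_of_comm (aZ_sq _ _ (x3_sq n) _) (aZ_sq _ _ (x3_sq n) _) hcomm
  | braid_s i h =>
      simp only [map_pow, map_mul, FreeGroup.lift_apply_of, GG_inl]
      show (aZ (s3 n) (x3 n) ((i : ℕ) : ℤ) * aZ (s3 n) (x3 n) (((i + 1 : ℕ)) : ℤ)) ^ 3 = 1
      rw [show (((i + 1 : ℕ)) : ℤ) = ((i : ℕ) : ℤ) + 1 by push_cast; ring]
      exact cube_of_braid (aZ_sq _ _ (x3_sq n) _) (aZ_sq _ _ (x3_sq n) _)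
        (braid_all n (s3 n) (x3 n) hn (x3_sq n) (hc3 n) (hord3 n) ((i : ℕ) : ℤ))
  | comm_r i hne =>
      simp only [map_pow, map_mul, FreeGroup.lift_apply_of, GG_inl, GG_inr]
      have hi := i.isLt
      have hcomm := hrc3 n (i : ℕ) (by omega)
      rw [← aZ_natCast] at hcomm
      exact sq_of_comm (r3_sq n) (aZ_sq _ _ (x3_sq n) _) hcomm
  | braid_r h =>
      simp only [map_pow, map_mul, FreeGroup.lift_apply_of, GG_inl, GG_inr]
      show (r3 n * aZ (s3 n) (x3 n) ((1 : ℕ) : ℤ)) ^ 3 = 1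
      have h1 : aZ (s3 n) (x3 n) ((1 : ℕ) : ℤ) = s3 n * x3 n * (s3 n)⁻¹ := by
        rw [Nat.cast_one]; unfold aZ; rw [zpow_one]
      have hb : r3 n * aZ (s3 n) (x3 n) ((1 : ℕ) : ℤ) * r3 n =
          aZ (s3 n) (x3 n) ((1 : ℕ) : ℤ) * r3 n * aZ (s3 n) (x3 n) ((1 : ℕ) : ℤ) := by
        rw [h1]; exact hrb3 n
      exact cube_of_braid (r3_sq n) (aZ_sq _ _ (x3_sq n) _) hb

end Instantiation

section MapLemmas
variable {G H : Type*} [Group G] [Group H]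

lemma map_aZ (φ : G →* H) (s x : G) (k : ℤ) : φ (aZ s x k) = aZ (φ s) (φ x) k := by
  unfold aZ
  rw [map_mul, map_mul, map_inv, map_zpow]

lemma map_seg (φ : G →* H) (f : ℕ → G) (j l : ℕ) :
    φ (seg f j l) = seg (fun i => φ (f i)) j l := by
  unfold seg
  rw [map_list_prod, List.map_map]
  rfl

lemma seg_eq_segZ (f1 : ℕ → G) (f2 : ℤ → G) :
    ∀ l, (∀ i : ℕ, i < l → f1 i = f2 i) → seg f1 0 l = segZ f2 0 l := by
  intro l
  induction l with
  | zero => intro _; rfl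
  | succ l ih =>
      intro h
      rw [seg_succ, segZ_succ, ih (fun i hi => h i (by omega))]
      simp only [zero_add]
      rw [h l (by omega)]

end MapLemmas

/-- The Coxeter group of type `D_n` admits the three-generator presentation with
generators `σ₁, σ, ρ`, the isomorphism sending `σ₁ ↦ s₁`, `σ ↦ s₁s₂⋯s_{n-1}`, `ρ ↦ r`. -/
theorem three_generator_presentation_of_coxeter_D (n : ℕ) (hn : 3 ≤ n) :
    ∃ e : PresentedGroup {r | IsCoxDThreeRel n r} ≃* PresentedGroup {r | IsCoxDRel n r},
      e (.of 0) = PresentedGroup.of (Sum.inl ⟨0, by omega⟩) ∧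
      e (.of 2) = PresentedGroup.of (Sum.inr ()) ∧
      e (.of 1) = (List.ofFn (fun i : Fin (n - 1) =>
        (PresentedGroup.of (Sum.inl i) : PresentedGroup {r | IsCoxDRel n r}))).prod := by
  have h1 : (PresentedGroup.toGroup (lift_GG n hn)).comp (PresentedGroup.toGroup (lift_FF n hn)) =
      MonoidHom.id (PresentedGroup {r | IsCoxDThreeRel n r}) := by
    apply PresentedGroup.ext
    intro y
    fin_cases y
    · simp only [MonoidHom.comp_apply, MonoidHom.id_apply, PresentedGroup.toGroup.of]
      show (PresentedGroup.toGroup (lift_GG n hn)) (tD n 0) = PresentedGroup.of (0 : Fin 3)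
      rw [tD_eq n 0 (by omega), PresentedGroup.toGroup.of]
      show aZ (s3 n) (x3 n) ((0 : ℕ) : ℤ) = PresentedGroup.of 0
      rw [Nat.cast_zero, aZ_zero]
      rfl
    · simp only [MonoidHom.comp_apply, MonoidHom.id_apply, PresentedGroup.toGroup.of]
      show (PresentedGroup.toGroup (lift_GG n hn)) (seg (tD n) 0 (n - 1)) =
        PresentedGroup.of (1 : Fin 3)
      rw [map_seg]
      have hseg : seg (fun i => (PresentedGroup.toGroup (lift_GG n hn)) (tD n i)) 0 (n - 1)
          = segZ (aZ (s3 n) (x3 n)) 0 (n - 1) := by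
        apply seg_eq_segZ
        intro i hi
        rw [tD_eq n i (by omega), PresentedGroup.toGroup.of]
        rfl
      rw [hseg, ← s_eq_prod0 n (s3 n) (x3 n) hn (hord3 n)]
      rfl
    · simp only [MonoidHom.comp_apply, MonoidHom.id_apply, PresentedGroup.toGroup.of]
      show (PresentedGroup.toGroup (lift_GG n hn)) (PresentedGroup.of (Sum.inr ())) =
        PresentedGroup.of (2 : Fin 3)
      rw [PresentedGroup.toGroup.of]
      rfl
  have h2 : (PresentedGroup.toGroup (lift_FF n hn)).comp (PresentedGroup.toGroup (lift_GG n hn)) =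
      MonoidHom.id (PresentedGroup {r | IsCoxDRel n r}) := by
    apply PresentedGroup.ext
    intro z
    rcases z with i | u
    · simp only [MonoidHom.comp_apply, MonoidHom.id_apply, PresentedGroup.toGroup.of]
      rw [GG_inl, map_aZ]
      have hfs : (PresentedGroup.toGroup (lift_FF n hn)) (s3 n) = seg (tD n) 0 (n - 1) := by
        show (PresentedGroup.toGroup (lift_FF n hn)) (PresentedGroup.of 1) = _
        rw [PresentedGroup.toGroup.of]
        rfl
      have hfx : (PresentedGroup.toGroup (lift_FF n hn)) (x3 n) = tD n 0 := by
        show (PresentedGroup.toGroup (lift_FF n hn)) (PresentedGroup.of 0) = _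
        rw [PresentedGroup.toGroup.of]
        rfl
      rw [hfs, hfx, aZ_natCast, tD_conj n hn (i : ℕ) (by have := i.isLt; omega),
        tD_eq n (i : ℕ) i.isLt, Fin.eta]
    · cases u
      simp only [MonoidHom.comp_apply, MonoidHom.id_apply, PresentedGroup.toGroup.of]
      rw [GG_inr]
      show (PresentedGroup.toGroup (lift_FF n hn)) (PresentedGroup.of 2) = _
      rw [PresentedGroup.toGroup.of]
      rfl
  refine ⟨MonoidHom.toMulEquiv (PresentedGroup.toGroup (lift_FF n hn))
    (PresentedGroup.toGroup (lift_GG n hn)) h1 h2, ?_, ?_, ?_⟩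
  · show (PresentedGroup.toGroup (lift_FF n hn)) (PresentedGroup.of 0) = _
    rw [PresentedGroup.toGroup.of, FF_0, tD_eq n 0 (by omega)]
  · show (PresentedGroup.toGroup (lift_FF n hn)) (PresentedGroup.of 2) = _
    rw [PresentedGroup.toGroup.of, FF_2]
    rfl
  · show (PresentedGroup.toGroup (lift_FF n hn)) (PresentedGroup.of 1) = _
    rw [PresentedGroup.toGroup.of, FF_1, List.ofFn_eq_map]
    unfold seg
    rw [← (List.ext_getElem (by simp) (by simp) :
        (List.finRange (n - 1)).map Fin.val = List.range (n - 1)), List.map_map]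
    congr 1
    apply List.map_congr_left
    intro a _
    show tD n (0 + (a : ℕ)) = PresentedGroup.of (Sum.inl a)
    rw [zero_add, tD_eq n (a : ℕ) a.isLt, Fin.eta]

end CoxeterD
end

section
/- The Artin group of type E₈ admits a presentation with three generators σ₁, σ, ω and relations: σ₁σⁱσ₁σ⁻ⁱ = σⁱσ₁σ⁻ⁱσ₁ for i = 2, 3, 4; σ⁸ = (σσ₁)⁷; ωσⁱσ₁σ⁻ⁱ = σⁱσ₁σ⁻ⁱω for i = 0, 1, 3, 4, 5, 6; ωσ²σ₁σ⁻²ω = σ²σ₁σ⁻²ωσ²σ₁σ⁻². That is, this presented group is isomorphic to the Artin group of type E₈. -/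
namespace TypeE8

open FreeGroup in
/-- Relators of the standard Artin presentation of type `E₈`: `Sum.inl i` is `s_{i+1}`
(`i : Fin 7`, the chain), `Sum.inr ()` is `t`, attached to the third node `s₃`. -/
inductive IsE8Rel : FreeGroup (Fin 7 ⊕ Unit) → Prop
  | comm_ss (i j : Fin 7) (h : (i : ℕ) + 1 < j) :
      IsE8Rel (of (.inl i) * of (.inl j) * (of (.inl j) * of (.inl i))⁻¹)
  | braid_s (i : ℕ) (h : i + 1 < 7) :
      IsE8Rel (of (.inl ⟨i, by omega⟩) * of (.inl ⟨i + 1, h⟩) * of (.inl ⟨i, by omega⟩) *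
        (of (.inl ⟨i + 1, h⟩) * of (.inl ⟨i, by omega⟩) * of (.inl ⟨i + 1, h⟩))⁻¹)
  | comm_t (i : Fin 7) (h : (i : ℕ) ≠ 2) :
      IsE8Rel (of (.inr ()) * of (.inl i) * (of (.inl i) * of (.inr ()))⁻¹)
  | braid_t :
      IsE8Rel (of (.inr ()) * of (.inl 2) * of (.inr ()) *
        (of (.inl 2) * of (.inr ()) * of (.inl 2))⁻¹)

open FreeGroup in
/-- Relators of the three-generator presentation of the Artin group of type `E₈`:
generator `0` is `σ₁`, generator `1` is `σ`, generator `2` is `ω`. -/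
inductive IsE8ThreeRel : FreeGroup (Fin 3) → Prop
  | r₁ (i : ℕ) (h : i = 2 ∨ i = 3 ∨ i = 4) :
      IsE8ThreeRel (of 0 * of 1 ^ i * of 0 * (of 1 ^ i)⁻¹ *
        (of 1 ^ i * of 0 * (of 1 ^ i)⁻¹ * of 0)⁻¹)
  | r₂ : IsE8ThreeRel (of 1 ^ 8 * ((of 1 * of 0) ^ 7)⁻¹)
  | r₃ (i : ℕ) (h : i = 0 ∨ i = 1 ∨ i = 3 ∨ i = 4 ∨ i = 5 ∨ i = 6) :
      IsE8ThreeRel (of 2 * (of 1 ^ i * of 0 * (of 1 ^ i)⁻¹) *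
        (of 1 ^ i * of 0 * (of 1 ^ i)⁻¹ * of 2)⁻¹)
  | r₄ : IsE8ThreeRel (of 2 * (of 1 ^ 2 * of 0 * (of 1 ^ 2)⁻¹) * of 2 *
      (of 1 ^ 2 * of 0 * (of 1 ^ 2)⁻¹ * of 2 * (of 1 ^ 2 * of 0 * (of 1 ^ 2)⁻¹))⁻¹)

section Helpers
variable {G : Type*} [Group G]

lemma swapR {x y : G} (h : x * y = y * x) (c : G) : y * (x * c) = x * (y * c) := by
  rw [← mul_assoc, ← h, mul_assoc]

lemma brdR {x y : G} (h : x * y * x = y * x * y) (c : G) :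
    x * (y * (x * c)) = y * (x * (y * c)) := by
  simp only [← mul_assoc]; rw [h]

lemma brdE {x y : G} (h : x * y * x = y * x * y) : x * (y * x) = y * (x * y) := by
  simp only [← mul_assoc]; rw [h]

end Helpers

namespace Three

abbrev Hgp := PresentedGroup {r | IsE8ThreeRel r}

def a : Hgp := .of 0
def b : Hgp := .of 1
def w : Hgp := .of 2

lemma relH {r : FreeGroup (Fin 3)} (h : IsE8ThreeRel r) : PresentedGroup.mk _ r = (1 : Hgp) :=
  (QuotientGroup.eq_one_iff r).mpr (Subgroup.subset_normalClosure h)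

lemma rel1 (i : ℕ) (h : i = 2 ∨ i = 3 ∨ i = 4) :
    a * (b ^ i * a * (b ^ i)⁻¹) = b ^ i * a * (b ^ i)⁻¹ * a := by
  have := relH (IsE8ThreeRel.r₁ i h)
  simp only [map_mul, map_inv, map_pow, mul_inv_eq_one] at this
  simp only [mul_assoc] at this ⊢
  exact this

lemma rel2 : b ^ 8 = (b * a) ^ 7 := by
  have := relH IsE8ThreeRel.r₂
  simp only [map_mul, map_inv, map_pow, mul_inv_eq_one] at this
  exact this

lemma rel3 (i : ℕ) (h : i = 0 ∨ i = 1 ∨ i = 3 ∨ i = 4 ∨ i = 5 ∨ i = 6) :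
    w * (b ^ i * a * (b ^ i)⁻¹) = b ^ i * a * (b ^ i)⁻¹ * w := by
  have := relH (IsE8ThreeRel.r₃ i h)
  simp only [map_mul, map_inv, map_pow, mul_inv_eq_one] at this
  exact this

lemma rel4 : w * (b ^ 2 * a * (b ^ 2)⁻¹) * w =
    b ^ 2 * a * (b ^ 2)⁻¹ * w * (b ^ 2 * a * (b ^ 2)⁻¹) := by
  have := relH IsE8ThreeRel.r₄
  simp only [map_mul, map_inv, map_pow, mul_inv_eq_one] at this
  exact this


/-- conjugates of `a` by powers of `b` -/
def A (i : ℤ) : Hgp := b ^ i * a * b ^ (-i)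

lemma A_zero : A 0 = a := by simp [A]

lemma A_nat (n : ℕ) : A n = b ^ n * a * (b ^ n)⁻¹ := by
  simp [A, zpow_neg, zpow_natCast]

lemma conjA (k i : ℤ) : b ^ k * A i * (b ^ k)⁻¹ = A (i + k) := by
  simp only [A]; group

lemma comm_core (i : ℕ) (h : i = 2 ∨ i = 3 ∨ i = 4) : a * A i = A i * a := by
  rw [A_nat]; exact rel1 i h

lemma centerH : a * b ^ (8 : ℤ) = b ^ (8 : ℤ) * a := by
  have h8 : b ^ (8 : ℕ) = (b * a) ^ 7 := rel2
  have hab : (a * b) ^ 7 = b ^ (8 : ℕ) := by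
    have e : (a * b) ^ 7 = b⁻¹ * (b * a) ^ 7 * b := by
      simp only [pow_succ, pow_zero, one_mul]; group
    rw [e, ← h8]; group
  calc a * b ^ (8:ℤ) = a * b ^ (8:ℕ) := by norm_cast
  _ = a * (b * a) ^ 7 := by rw [h8]
  _ = (a * b) ^ 7 * a := by simp only [pow_succ, pow_zero, one_mul]; group
  _ = b ^ (8:ℕ) * a := by rw [hab]
  _ = b ^ (8:ℤ) * a := by norm_cast

lemma A_period (i : ℤ) : A (i + 8) = A i := by
  have h' : a * b ^ (8 : ℤ) = b ^ (8 : ℤ) * a := centerH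
  calc b ^ (i+8) * a * b ^ (-(i+8)) = b ^ i * (b ^ (8:ℤ) * a * (b ^ (8:ℤ))⁻¹) * b ^ (-i) := by group
  _ = b ^ i * (a * b ^ (8:ℤ) * (b ^ (8:ℤ))⁻¹) * b ^ (-i) := by rw [← h']
  _ = b ^ i * a * b ^ (-i) := by group

lemma conj_mul_ {G : Type*} [Group G] (g x y : G) :
    (g * x * g⁻¹) * (g * y * g⁻¹) = g * (x * y) * g⁻¹ := by group

lemma commGap (g : ℤ) (hg : a * A g = A g * a) (i : ℤ) :
    A i * A (i + g) = A (i + g) * A i := by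
  have l0 : A i = b ^ i * A 0 * (b ^ i)⁻¹ := by rw [conjA]; norm_num
  have l1 : A (i + g) = b ^ i * A g * (b ^ i)⁻¹ := by rw [conjA, add_comm]
  rw [l0, l1, conj_mul_, conj_mul_, A_zero, hg]

lemma comm2 : a * A 2 = A 2 * a := comm_core 2 (by norm_num)
lemma comm3 : a * A 3 = A 3 * a := comm_core 3 (by norm_num)
lemma comm4 : a * A 4 = A 4 * a := comm_core 4 (by norm_num)

lemma comm5 : a * A 5 = A 5 * a := by
  have := commGap 3 comm3 5
  rw [show (5 + 3 : ℤ) = 0 + 8 by norm_num, A_period, A_zero] at this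
  exact this.symm

lemma comm6 : a * A 6 = A 6 * a := by
  have := commGap 2 comm2 6
  rw [show (6 + 2 : ℤ) = 0 + 8 by norm_num, A_period, A_zero] at this
  exact this.symm

lemma commAll (g : ℤ) (h2 : 2 ≤ g) (h6 : g ≤ 6) : a * A g = A g * a := by
  interval_cases g
  · exact comm2
  · exact comm3
  · exact comm4
  · exact comm5
  · exact comm6

lemma prodH : b = A 0 * A 1 * A 2 * A 3 * A 4 * A 5 * A 6 := by
  have key : (b * a) ^ 7 = b ^ (7:ℕ) * (A (-6) * A (-5) * A (-4) * A (-3) * A (-2) * A (-1) * A 0) := by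
    simp only [A, pow_succ, pow_zero, one_mul]; group
  have h8 : b ^ (8:ℕ) = b ^ (7:ℕ) * (A (-6) * A (-5) * A (-4) * A (-3) * A (-2) * A (-1) * A 0) := by
    rw [← key]; exact rel2
  have hb : b = A (-6) * A (-5) * A (-4) * A (-3) * A (-2) * A (-1) * A 0 := by
    have h2 : b ^ (7:ℕ) * b = b ^ (7:ℕ) *
        (A (-6) * A (-5) * A (-4) * A (-3) * A (-2) * A (-1) * A 0) := by
      rw [← pow_succ]; exact h8
    exact mul_left_cancel h2
  have conj6 : A 0 * A 1 * A 2 * A 3 * A 4 * A 5 * A 6 =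
      b ^ (6:ℤ) * (A (-6) * A (-5) * A (-4) * A (-3) * A (-2) * A (-1) * A 0) * (b ^ (6:ℤ))⁻¹ := by
    simp only [A]; group
  rw [conj6, ← hb]
  group


lemma braid01 : A 0 * A 1 * A 0 = A 1 * A 0 * A 1 := by
  have e3 : A 1 * b = b * a := by simp only [A]; group
  rw [prodH] at e3
  simp only [mul_assoc] at e3
  rw [show A 6 * a = a * A 6 from comm6.symm] at e3
  rw [swapR comm5, swapR comm4, swapR comm3, swapR comm2] at e3
  have e4 : (A 1 * (A 0 * A 1)) * (A 2 * (A 3 * (A 4 * (A 5 * A 6)))) =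
      (A 0 * (A 1 * a)) * (A 2 * (A 3 * (A 4 * (A 5 * A 6)))) := by
    simp only [mul_assoc]; exact e3
  have e5 := mul_right_cancel e4
  rw [A_zero]
  simp only [mul_assoc]
  exact e5.symm

lemma braidK (i : ℤ) : A i * A (i + 1) * A i = A (i + 1) * A i * A (i + 1) := by
  have l0 : A i = b ^ i * A 0 * (b ^ i)⁻¹ := by rw [conjA, zero_add]
  have l1 : A (i + 1) = b ^ i * A 1 * (b ^ i)⁻¹ := by rw [conjA, add_comm]
  rw [l0, l1, conj_mul_, conj_mul_, conj_mul_, conj_mul_, braid01]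

lemma commE (i j : ℤ) (h2 : 2 ≤ j - i) (h6 : j - i ≤ 6) : A i * A j = A j * A i := by
  have := commGap (j - i) (commAll _ h2 h6) i
  rwa [show i + (j - i) = j by ring] at this


lemma prodH' : A 0 * (A 1 * (A 2 * (A 3 * (A 4 * (A 5 * A 6))))) = b := by
  simp only [← mul_assoc]; exact prodH.symm

end Three

namespace Std8

abbrev Ggp := PresentedGroup {r | IsE8Rel r}

def s (i : Fin 7) : Ggp := .of (.inl i)
def t : Ggp := .of (.inr ())
def sig : Ggp := (List.ofFn (fun i : Fin 7 => (PresentedGroup.of (Sum.inl i) : Ggp))).prod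

lemma relG {r : FreeGroup (Fin 7 ⊕ Unit)} (h : IsE8Rel r) :
    PresentedGroup.mk _ r = (1 : Ggp) :=
  (QuotientGroup.eq_one_iff r).mpr (Subgroup.subset_normalClosure h)

lemma commS (i j : Fin 7) (h : (i : ℕ) + 1 < j) : s i * s j = s j * s i := by
  have := relG (IsE8Rel.comm_ss i j h)
  simp only [map_mul, map_inv, mul_inv_eq_one] at this
  exact this

lemma braidS (i : ℕ) (h : i + 1 < 7) :
    s ⟨i, by omega⟩ * s ⟨i + 1, h⟩ * s ⟨i, by omega⟩ =
      s ⟨i + 1, h⟩ * s ⟨i, by omega⟩ * s ⟨i + 1, h⟩ := by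
  have := relG (IsE8Rel.braid_s i h)
  simp only [map_mul, map_inv, mul_inv_eq_one] at this
  exact this

lemma commT (i : Fin 7) (h : (i : ℕ) ≠ 2) : t * s i = s i * t := by
  have := relG (IsE8Rel.comm_t i h)
  simp only [map_mul, map_inv, mul_inv_eq_one] at this
  exact this

lemma braidT : t * s 2 * t = s 2 * t * s 2 := by
  have := relG IsE8Rel.braid_t
  simp only [map_mul, map_inv, mul_inv_eq_one] at this
  exact this

lemma sigexp : sig = s 0 * (s 1 * (s 2 * (s 3 * (s 4 * (s 5 * s 6))))) := by
  simp [sig, s, List.ofFn_succ, Fin.succ]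


lemma bd0 : s 0 * s 1 * s 0 = s 1 * s 0 * s 1 := braidS 0 (by omega)
lemma bd1 : s 1 * s 2 * s 1 = s 2 * s 1 * s 2 := braidS 1 (by omega)
lemma bd2 : s 2 * s 3 * s 2 = s 3 * s 2 * s 3 := braidS 2 (by omega)
lemma bd3 : s 3 * s 4 * s 3 = s 4 * s 3 * s 4 := braidS 3 (by omega)
lemma bd4 : s 4 * s 5 * s 4 = s 5 * s 4 * s 5 := braidS 4 (by omega)
lemma bd5 : s 5 * s 6 * s 5 = s 6 * s 5 * s 6 := braidS 5 (by omega)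

lemma sh0 : sig * s 0 = s 1 * sig := by
  rw [sigexp]
  simp only [mul_assoc]
  rw [show s 6 * s 0 = s 0 * s 6 from (commS 0 6 (by decide)).symm]
  rw [swapR (commS 0 5 (by decide))]
  rw [swapR (commS 0 4 (by decide))]
  rw [swapR (commS 0 3 (by decide))]
  rw [swapR (commS 0 2 (by decide))]
  rw [brdR bd0]

lemma sh1 : sig * s 1 = s 2 * sig := by
  rw [sigexp]
  simp only [mul_assoc]
  rw [show s 6 * s 1 = s 1 * s 6 from (commS 1 6 (by decide)).symm]
  rw [swapR (commS 1 5 (by decide))]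
  rw [swapR (commS 1 4 (by decide))]
  rw [swapR (commS 1 3 (by decide))]
  rw [brdR bd1]
  rw [swapR ((commS 0 2 (by decide)).symm)]

lemma sh2 : sig * s 2 = s 3 * sig := by
  rw [sigexp]
  simp only [mul_assoc]
  rw [show s 6 * s 2 = s 2 * s 6 from (commS 2 6 (by decide)).symm]
  rw [swapR (commS 2 5 (by decide))]
  rw [swapR (commS 2 4 (by decide))]
  rw [brdR bd2]
  rw [swapR ((commS 1 3 (by decide)).symm)]
  rw [swapR ((commS 0 3 (by decide)).symm)]

lemma sh3 : sig * s 3 = s 4 * sig := by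
  rw [sigexp]
  simp only [mul_assoc]
  rw [show s 6 * s 3 = s 3 * s 6 from (commS 3 6 (by decide)).symm]
  rw [swapR (commS 3 5 (by decide))]
  rw [brdR bd3]
  rw [swapR ((commS 2 4 (by decide)).symm)]
  rw [swapR ((commS 1 4 (by decide)).symm)]
  rw [swapR ((commS 0 4 (by decide)).symm)]

lemma sh4 : sig * s 4 = s 5 * sig := by
  rw [sigexp]
  simp only [mul_assoc]
  rw [show s 6 * s 4 = s 4 * s 6 from (commS 4 6 (by decide)).symm]
  rw [brdR bd4]
  rw [swapR ((commS 3 5 (by decide)).symm)]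
  rw [swapR ((commS 2 5 (by decide)).symm)]
  rw [swapR ((commS 1 5 (by decide)).symm)]
  rw [swapR ((commS 0 5 (by decide)).symm)]

lemma sh5 : sig * s 5 = s 6 * sig := by
  rw [sigexp]
  simp only [mul_assoc]
  rw [brdE bd5]
  rw [swapR ((commS 4 6 (by decide)).symm)]
  rw [swapR ((commS 3 6 (by decide)).symm)]
  rw [swapR ((commS 2 6 (by decide)).symm)]
  rw [swapR ((commS 1 6 (by decide)).symm)]
  rw [swapR ((commS 0 6 (by decide)).symm)]

lemma cj0 : sig * s 0 * sig⁻¹ = s 1 := by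
  rw [sh0]; simp only [mul_assoc, mul_inv_cancel, mul_one]

lemma cj1 : sig * s 1 * sig⁻¹ = s 2 := by
  rw [sh1]; simp only [mul_assoc, mul_inv_cancel, mul_one]

lemma cj2 : sig * s 2 * sig⁻¹ = s 3 := by
  rw [sh2]; simp only [mul_assoc, mul_inv_cancel, mul_one]

lemma cj3 : sig * s 3 * sig⁻¹ = s 4 := by
  rw [sh3]; simp only [mul_assoc, mul_inv_cancel, mul_one]

lemma cj4 : sig * s 4 * sig⁻¹ = s 5 := by
  rw [sh4]; simp only [mul_assoc, mul_inv_cancel, mul_one]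

lemma cj5 : sig * s 5 * sig⁻¹ = s 6 := by
  rw [sh5]; simp only [mul_assoc, mul_inv_cancel, mul_one]

lemma p0 : sig ^ 0 * s 0 * (sig ^ 0)⁻¹ = s 0 := by simp
lemma p1 : sig ^ 1 * s 0 * (sig ^ 1)⁻¹ = s 1 := by rw [pow_one]; exact cj0

lemma p2 : sig ^ 2 * s 0 * (sig ^ 2)⁻¹ = s 2 := by
  have e : sig ^ 2 * s 0 * (sig ^ 2)⁻¹ = sig * (sig ^ 1 * s 0 * (sig ^ 1)⁻¹) * sig⁻¹ := by
    group
  rw [e, p1]; exact cj1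

lemma p3 : sig ^ 3 * s 0 * (sig ^ 3)⁻¹ = s 3 := by
  have e : sig ^ 3 * s 0 * (sig ^ 3)⁻¹ = sig * (sig ^ 2 * s 0 * (sig ^ 2)⁻¹) * sig⁻¹ := by
    group
  rw [e, p2]; exact cj2

lemma p4 : sig ^ 4 * s 0 * (sig ^ 4)⁻¹ = s 4 := by
  have e : sig ^ 4 * s 0 * (sig ^ 4)⁻¹ = sig * (sig ^ 3 * s 0 * (sig ^ 3)⁻¹) * sig⁻¹ := by
    group
  rw [e, p3]; exact cj3

lemma p5 : sig ^ 5 * s 0 * (sig ^ 5)⁻¹ = s 5 := by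
  have e : sig ^ 5 * s 0 * (sig ^ 5)⁻¹ = sig * (sig ^ 4 * s 0 * (sig ^ 4)⁻¹) * sig⁻¹ := by
    group
  rw [e, p4]; exact cj4

lemma p6 : sig ^ 6 * s 0 * (sig ^ 6)⁻¹ = s 6 := by
  have e : sig ^ 6 * s 0 * (sig ^ 6)⁻¹ = sig * (sig ^ 5 * s 0 * (sig ^ 5)⁻¹) * sig⁻¹ := by
    group
  rw [e, p5]; exact cj5

lemma main2 : (sig * s 0) ^ 7 = sig ^ 8 := by
  have step : (s 0 * sig) ^ 7 =
      (s 0 * ((sig * s 0 * sig⁻¹) * ((sig ^ 2 * s 0 * (sig ^ 2)⁻¹) * ((sig ^ 3 * s 0 * (sig ^ 3)⁻¹) *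
        ((sig ^ 4 * s 0 * (sig ^ 4)⁻¹) * ((sig ^ 5 * s 0 * (sig ^ 5)⁻¹) *
        (sig ^ 6 * s 0 * (sig ^ 6)⁻¹))))))) * sig ^ 7 := by
    simp only [pow_succ, pow_zero, one_mul]; group
  rw [cj0, p2, p3, p4, p5, p6, ← sigexp] at step
  calc (sig * s 0) ^ 7 = sig * (s 0 * sig) ^ 7 * sig⁻¹ := by
        simp only [pow_succ, pow_zero, one_mul]; group
  _ = sig * (sig * sig ^ 7) * sig⁻¹ := by rw [step]
  _ = sig ^ 8 := by group

end Std8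


namespace Assemble

open Three Std8

def f0 : Fin 3 → Ggp := fun i => if i = 0 then s 0 else if i = 1 then sig else t

lemma f00 : f0 0 = s 0 := rfl
lemma f01 : f0 1 = sig := rfl
lemma f02 : f0 2 = t := rfl

lemma phi_check : ∀ r ∈ {r | IsE8ThreeRel r}, FreeGroup.lift f0 r = 1 := by
  rintro r hr
  cases hr with
  | r₁ i h =>
    simp only [map_mul, map_inv, map_pow, FreeGroup.lift_apply_of, f00, f01, f02, mul_inv_eq_one]
    obtain rfl | rfl | rfl := h
    · rw [show s 0 * sig ^ 2 * s 0 * (sig ^ 2)⁻¹ = s 0 * (sig ^ 2 * s 0 * (sig ^ 2)⁻¹) from by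
        group, p2]
      exact commS 0 2 (by decide)
    · rw [show s 0 * sig ^ 3 * s 0 * (sig ^ 3)⁻¹ = s 0 * (sig ^ 3 * s 0 * (sig ^ 3)⁻¹) from by
        group, p3]
      exact commS 0 3 (by decide)
    · rw [show s 0 * sig ^ 4 * s 0 * (sig ^ 4)⁻¹ = s 0 * (sig ^ 4 * s 0 * (sig ^ 4)⁻¹) from by
        group, p4]
      exact commS 0 4 (by decide)
  | r₂ =>
    simp only [map_mul, map_inv, map_pow, FreeGroup.lift_apply_of, f00, f01, mul_inv_eq_one]
    exact main2.symm
  | r₃ i h =>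
    simp only [map_mul, map_inv, map_pow, FreeGroup.lift_apply_of, f00, f01, f02, mul_inv_eq_one]
    obtain rfl | rfl | rfl | rfl | rfl | rfl := h
    · rw [p0]; exact commT 0 (by decide)
    · rw [p1]; exact commT 1 (by decide)
    · rw [p3]; exact commT 3 (by decide)
    · rw [p4]; exact commT 4 (by decide)
    · rw [p5]; exact commT 5 (by decide)
    · rw [p6]; exact commT 6 (by decide)
  | r₄ =>
    simp only [map_mul, map_inv, map_pow, FreeGroup.lift_apply_of, f00, f01, f02, mul_inv_eq_one]
    rw [p2]
    exact braidT

def φ : Hgp →* Ggp := PresentedGroup.toGroup phi_check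

lemma φ_of (x : Fin 3) : φ (.of x) = f0 x := PresentedGroup.toGroup.of phi_check

def g0 : Fin 7 ⊕ Unit → Hgp :=
  Sum.elim (fun i => Three.b ^ (i : ℕ) * Three.a * (Three.b ^ (i : ℕ))⁻¹) (fun _ => Three.w)

lemma psi_check : ∀ r ∈ {r | IsE8Rel r}, FreeGroup.lift g0 r = 1 := by
  rintro r hr
  cases hr with
  | comm_ss i j h =>
    simp only [map_mul, map_inv, FreeGroup.lift_apply_of, g0, Sum.elim_inl, mul_inv_eq_one,
      ← Three.A_nat]
    have hj := j.isLt
    exact Three.commE _ _ (by omega) (by omega)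
  | braid_s i h =>
    simp only [map_mul, map_inv, FreeGroup.lift_apply_of, g0, Sum.elim_inl, mul_inv_eq_one,
      ← Three.A_nat, Fin.val_mk]
    push_cast
    exact Three.braidK i
  | comm_t i h =>
    simp only [map_mul, map_inv, FreeGroup.lift_apply_of, g0, Sum.elim_inl, Sum.elim_inr,
      mul_inv_eq_one]
    fin_cases i
    · exact Three.rel3 0 (by norm_num)
    · exact Three.rel3 1 (by norm_num)
    · exact absurd rfl h
    · exact Three.rel3 3 (by norm_num)
    · exact Three.rel3 4 (by norm_num)
    · exact Three.rel3 5 (by norm_num)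
    · exact Three.rel3 6 (by norm_num)
  | braid_t =>
    simp only [map_mul, map_inv, FreeGroup.lift_apply_of, g0, Sum.elim_inl, Sum.elim_inr,
      mul_inv_eq_one]
    exact Three.rel4

def ψ : Ggp →* Hgp := PresentedGroup.toGroup psi_check

lemma ψ_of (x : Fin 7 ⊕ Unit) : ψ (.of x) = g0 x := PresentedGroup.toGroup.of psi_check

lemma pAll (i : Fin 7) : sig ^ (i : ℕ) * s 0 * (sig ^ (i : ℕ))⁻¹ = s i := by
  fin_cases i
  · exact p0
  · exact p1
  · exact p2
  · exact p3
  · exact p4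
  · exact p5
  · exact p6

lemma comp1 : ψ.comp φ = MonoidHom.id Hgp := by
  apply PresentedGroup.ext
  intro x
  fin_cases x
  · show ψ (φ (.of 0)) = PresentedGroup.of 0
    rw [φ_of, f00]
    show ψ (.of (.inl 0)) = _
    rw [ψ_of]
    simp [g0, Three.a]
  · show ψ (φ (.of 1)) = PresentedGroup.of 1
    rw [φ_of, f01, sigexp]
    simp only [map_mul, Std8.s]
    simp only [ψ_of, g0, Sum.elim_inl, ← Three.A_nat]
    exact Three.prodH'
  · show ψ (φ (.of 2)) = PresentedGroup.of 2
    rw [φ_of, f02]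
    show ψ (.of (.inr ())) = _
    rw [ψ_of]
    rfl

lemma comp2 : φ.comp ψ = MonoidHom.id Ggp := by
  apply PresentedGroup.ext
  rintro (i | ⟨⟩)
  · show φ (ψ (.of (.inl i))) = PresentedGroup.of (.inl i)
    rw [ψ_of]
    simp only [g0, Sum.elim_inl, map_mul, map_inv, map_pow, Three.a, Three.b]
    rw [φ_of, φ_of, f00, f01]
    exact pAll i
  · show φ (ψ (.of (.inr ()))) = PresentedGroup.of (.inr ())
    rw [ψ_of]
    show φ (.of 2) = _
    rw [φ_of]
    rfl

end Assemble

open Assemble in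
/-- The Artin group of type `E₈` has a presentation with three generators `σ₁, σ, ω`,
the isomorphism sending `σ₁ ↦ s₁`, `σ ↦ s₁s₂⋯s₇`, `ω ↦ t`. -/
theorem three_generator_presentation_of_artin_E8 :
    ∃ e : PresentedGroup {r | IsE8ThreeRel r} ≃* PresentedGroup {r | IsE8Rel r},
      e (.of 0) = PresentedGroup.of (Sum.inl 0) ∧
      e (.of 2) = PresentedGroup.of (Sum.inr ()) ∧
      e (.of 1) = (List.ofFn (fun i : Fin 7 =>
        (PresentedGroup.of (Sum.inl i) : PresentedGroup {r | IsE8Rel r}))).prod := by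
  refine ⟨MonoidHom.toMulEquiv φ ψ comp1 comp2, ?_, ?_, ?_⟩
  · show φ (.of 0) = _
    rw [φ_of]; rfl
  · show φ (.of 2) = _
    rw [φ_of]; rfl
  · show φ (.of 1) = _
    rw [φ_of]; rfl


end TypeE8
end
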